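/- Let k ∈ ℝ and b ∈ ℂ with b ≠ 0, and define β(x,t) = |b|²/(1 + |b|²(x - 2kt)) on Ω = {(x,t) : 1 + |b|²(x - 2kt) ≠ 0}. Then β satisfies the canonical PDE ∂²β/∂t² = ∂/∂x[ -(1/2)(β')² - (1/4)β''' + ((β_t)² + (1/4)(β'')²)/β' ] at every point of Ω where β' ≠ 0. -/

import Mathlib

noncomputable section

/-- One-dimensional rational soliton. -/
def beta (k : ℝ) (b : ℂ) (x t : ℝ) : ℝ :=
  ‖b‖ ^ 2 / (1 + ‖b‖ ^ 2 * (x - 2 * k * t))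

def bx (k : ℝ) (b : ℂ) (x t : ℝ) : ℝ := deriv (fun y => beta k b y t) x
def bxx (k : ℝ) (b : ℂ) (x t : ℝ) : ℝ := deriv (fun y => bx k b y t) x
def bxxx (k : ℝ) (b : ℂ) (x t : ℝ) : ℝ := deriv (fun y => bxx k b y t) x
def bt (k : ℝ) (b : ℂ) (x t : ℝ) : ℝ := deriv (fun s => beta k b x s) t
def btt (k : ℝ) (b : ℂ) (x t : ℝ) : ℝ := deriv (fun s => bt k b x s) t

namespace SolAux

variable (k : ℝ) (b : ℂ) (x t : ℝ)

lemma den_hasDerivAt (c : ℝ) : HasDerivAt (fun y : ℝ => 1 + c * (y - 2 * k * t)) c x := by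
  simpa using (((hasDerivAt_id x).sub_const (2 * k * t)).const_mul c).const_add 1

lemma dent_hasDerivAt (c : ℝ) :
    HasDerivAt (fun s : ℝ => 1 + c * (x - 2 * k * s)) (-(2 * k * c)) t := by
  have h : HasDerivAt (fun s : ℝ => x - 2 * k * s) (-(2 * k)) t := by
    simpa using ((hasDerivAt_id t).const_mul (2 * k)).const_sub x
  simpa [mul_comm, mul_left_comm, mul_assoc] using (h.const_mul c).const_add 1

lemma nhds_ne (c : ℝ) (h : 1 + c * (x - 2 * k * t) ≠ 0) :
    ∀ᶠ y in nhds x, 1 + c * (y - 2 * k * t) ≠ 0 := by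
  have hc : Continuous fun y : ℝ => 1 + c * (y - 2 * k * t) := by fun_prop
  exact (hc.continuousAt).eventually_ne h

lemma nhds_ne_t (c : ℝ) (h : 1 + c * (x - 2 * k * t) ≠ 0) :
    ∀ᶠ s in nhds t, 1 + c * (x - 2 * k * s) ≠ 0 := by
  have hc : Continuous fun s : ℝ => 1 + c * (x - 2 * k * s) := by fun_prop
  exact (hc.continuousAt).eventually_ne h

lemma bx_eq (h : 1 + ‖b‖ ^ 2 * (x - 2 * k * t) ≠ 0) :
    bx k b x t = -(‖b‖ ^ 2) ^ 2 / (1 + ‖b‖ ^ 2 * (x - 2 * k * t)) ^ 2 := by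
  set c := ‖b‖ ^ 2
  have hd : HasDerivAt (fun y => beta k b y t) (-c ^ 2 / (1 + c * (x - 2 * k * t)) ^ 2) x := by
    have := (hasDerivAt_const x c).fun_div (den_hasDerivAt k x t c) h
    refine this.congr_deriv ?_
    ring
  exact hd.deriv

lemma bt_eq (h : 1 + ‖b‖ ^ 2 * (x - 2 * k * t) ≠ 0) :
    bt k b x t = 2 * k * (‖b‖ ^ 2) ^ 2 / (1 + ‖b‖ ^ 2 * (x - 2 * k * t)) ^ 2 := by
  set c := ‖b‖ ^ 2
  have hd : HasDerivAt (fun s => beta k b x s)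
      (2 * k * c ^ 2 / (1 + c * (x - 2 * k * t)) ^ 2) t := by
    have := (hasDerivAt_const t c).fun_div (dent_hasDerivAt k x t c) h
    refine this.congr_deriv ?_
    ring
  exact hd.deriv

lemma bxx_eq (h : 1 + ‖b‖ ^ 2 * (x - 2 * k * t) ≠ 0) :
    bxx k b x t = 2 * (‖b‖ ^ 2) ^ 3 / (1 + ‖b‖ ^ 2 * (x - 2 * k * t)) ^ 3 := by
  set c := ‖b‖ ^ 2 with hc
  have heq : (fun y => bx k b y t) =ᶠ[nhds x]
      fun y => -c ^ 2 / (1 + c * (y - 2 * k * t)) ^ 2 :=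
    (nhds_ne k x t c h).mono fun y hy => bx_eq k b y t hy
  rw [bxx, heq.deriv_eq]
  have hD2 : HasDerivAt (fun y : ℝ => (1 + c * (y - 2 * k * t)) ^ 2)
      (2 * (1 + c * (x - 2 * k * t)) * c) x := by
    simpa [mul_comm, pow_one] using (den_hasDerivAt k x t c).fun_pow 2
  have hd := (hasDerivAt_const x (-c ^ 2)).fun_div hD2 (pow_ne_zero 2 h)
  rw [hd.deriv]
  field_simp [h]
  ring

lemma bxxx_eq (h : 1 + ‖b‖ ^ 2 * (x - 2 * k * t) ≠ 0) :
    bxxx k b x t = -6 * (‖b‖ ^ 2) ^ 4 / (1 + ‖b‖ ^ 2 * (x - 2 * k * t)) ^ 4 := by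
  set c := ‖b‖ ^ 2 with hc
  have heq : (fun y => bxx k b y t) =ᶠ[nhds x]
      fun y => 2 * c ^ 3 / (1 + c * (y - 2 * k * t)) ^ 3 :=
    (nhds_ne k x t c h).mono fun y hy => bxx_eq k b y t hy
  rw [bxxx, heq.deriv_eq]
  have hD3 : HasDerivAt (fun y : ℝ => (1 + c * (y - 2 * k * t)) ^ 3)
      (3 * (1 + c * (x - 2 * k * t)) ^ 2 * c) x := by
    simpa [mul_comm] using (den_hasDerivAt k x t c).fun_pow 3
  have hd := (hasDerivAt_const x (2 * c ^ 3)).fun_div hD3 (pow_ne_zero 3 h)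
  rw [hd.deriv]
  field_simp [h]
  ring

lemma btt_eq (h : 1 + ‖b‖ ^ 2 * (x - 2 * k * t) ≠ 0) :
    btt k b x t = 8 * k ^ 2 * (‖b‖ ^ 2) ^ 3 / (1 + ‖b‖ ^ 2 * (x - 2 * k * t)) ^ 3 := by
  set c := ‖b‖ ^ 2 with hc
  have heq : (fun s => bt k b x s) =ᶠ[nhds t]
      fun s => 2 * k * c ^ 2 / (1 + c * (x - 2 * k * s)) ^ 2 :=
    (nhds_ne_t k x t c h).mono fun s hs => bt_eq k b x s hs
  rw [btt, heq.deriv_eq]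
  have hD2 : HasDerivAt (fun s : ℝ => (1 + c * (x - 2 * k * s)) ^ 2)
      (2 * (1 + c * (x - 2 * k * t)) * -(2 * k * c)) t := by
    simpa [mul_comm, pow_one] using (dent_hasDerivAt k x t c).fun_pow 2
  have hd := (hasDerivAt_const t (2 * k * c ^ 2)).fun_div hD2 (pow_ne_zero 2 h)
  rw [hd.deriv]
  field_simp [h]
  ring

lemma bracket_alg (c D kk : ℝ) (hD : D ≠ 0) (hc : c ≠ 0) :
    -(1 / 2) * (-c ^ 2 / D ^ 2) ^ 2 - (1 / 4) * (-6 * c ^ 4 / D ^ 4) +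
      ((2 * kk * c ^ 2 / D ^ 2) ^ 2 + (1 / 4) * (2 * c ^ 3 / D ^ 3) ^ 2) / (-c ^ 2 / D ^ 2) =
    -(4 * kk ^ 2 * c ^ 2) / D ^ 2 := by
  have h1 : -c ^ 2 / D ^ 2 ≠ 0 :=
    div_ne_zero (neg_ne_zero.mpr (pow_ne_zero 2 hc)) (pow_ne_zero 2 hD)
  field_simp
  ring

lemma final_alg (c D kk : ℝ) (hD : D ≠ 0) :
    8 * kk ^ 2 * c ^ 3 / D ^ 3 =
      (0 * D ^ 2 - -(4 * kk ^ 2 * c ^ 2) * (2 * D * c)) / (D ^ 2) ^ 2 := by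
  field_simp
  ring

end SolAux

/-- β(x,t) = |b|²/(1+|b|²(x-2kt)) satisfies the canonical PDE
    ∂²β/∂t² = ∂/∂x[-(1/2)(β')² - (1/4)β''' + ((β_t)² + (1/4)(β'')²)/β']. -/
theorem stmt_15 (k : ℝ) (b : ℂ) (hb : b ≠ 0) (x t : ℝ)
    (hΩ : 1 + ‖b‖ ^ 2 * (x - 2 * k * t) ≠ 0)
    (hbx : bx k b x t ≠ 0) :
    btt k b x t =
      deriv (fun y => -(1 / 2) * (bx k b y t) ^ 2 - (1 / 4) * bxxx k b y t +
        ((bt k b y t) ^ 2 + (1 / 4) * (bxx k b y t) ^ 2) / bx k b y t) x := by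
  set c := ‖b‖ ^ 2 with hc
  have hc0 : c ≠ 0 := by
    simp [hc, pow_eq_zero_iff, norm_eq_zero, hb]
  -- the bracket equals -4k²c²/D² on a neighborhood of x
  have heq : (fun y => -(1 / 2) * (bx k b y t) ^ 2 - (1 / 4) * bxxx k b y t +
        ((bt k b y t) ^ 2 + (1 / 4) * (bxx k b y t) ^ 2) / bx k b y t) =ᶠ[nhds x]
      fun y => -(4 * k ^ 2 * c ^ 2) / (1 + c * (y - 2 * k * t)) ^ 2 := by
    refine (SolAux.nhds_ne k x t c hΩ).mono fun y hy => ?_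
    dsimp only
    rw [SolAux.bx_eq k b y t hy, SolAux.bxx_eq k b y t hy, SolAux.bxxx_eq k b y t hy,
      SolAux.bt_eq k b y t hy]
    exact SolAux.bracket_alg c _ k hy hc0
  rw [heq.deriv_eq]
  have hD2 : HasDerivAt (fun y : ℝ => (1 + c * (y - 2 * k * t)) ^ 2)
      (2 * (1 + c * (x - 2 * k * t)) * c) x := by
    simpa [mul_comm, pow_one] using (SolAux.den_hasDerivAt k x t c).fun_pow 2
  have hd := (hasDerivAt_const x (-(4 * k ^ 2 * c ^ 2))).fun_div hD2 (pow_ne_zero 2 hΩ)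
  rw [hd.deriv, SolAux.btt_eq k b x t hΩ]
  exact SolAux.final_alg c _ k hΩ

end
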